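/- Let (X,T) be a topological dynamical system and μ ∈ M(X,T). Suppose every f in a dense subset {f_n} of C(X) is μ-A-equicontinuous for a fixed strictly increasing sequence A ⊆ ℕ, and equip X with the metric d(x,y) = Σ_n |f_n(x) − f_n(y)| / (2^{n+1} ‖f_n‖_∞). Then (X,T) is μ-A-equicontinuous: for each τ > 0 there is a compact K with μ(K) > 1 − τ such that {T^{a_n}|_K} is uniformly equicontinuous. -/

import Mathlib

open MeasureTheory Filter Topology

theorem stmt9 {X : Type*} [MetricSpace X] [CompactSpace X] [MeasurableSpace X]
    [BorelSpace X] (μ : Measure X) [IsProbabilityMeasure μ] (T : X ≃ₜ X)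
    (hT : MeasurePreserving T μ μ)
    (f : ℕ → C(X, ℝ)) (hdense : DenseRange f) (hne : ∀ n, f n ≠ 0)
    (a : ℕ → ℕ) (ha : StrictMono a)
    (hd : ∀ x y : X, dist x y = ∑' n : ℕ, |f n x - f n y| / (2 ^ (n + 1) * ‖f n‖))
    (heq : ∀ n : ℕ, ∀ τ > (0 : ℝ), ∃ K : Set X, IsCompact K ∧
      μ K > ENNReal.ofReal (1 - τ) ∧ ∀ ε > (0 : ℝ), ∃ δ > (0 : ℝ),
      ∀ x ∈ K, ∀ y ∈ K, dist x y < δ →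
        ∀ m : ℕ, |f n ((⇑T)^[a m] x) - f n ((⇑T)^[a m] y)| < ε) :
    ∀ τ > (0 : ℝ), ∃ K : Set X, IsCompact K ∧
      μ K > ENNReal.ofReal (1 - τ) ∧ ∀ ε > (0 : ℝ), ∃ δ > (0 : ℝ),
      ∀ x ∈ K, ∀ y ∈ K, dist x y < δ →
        ∀ m : ℕ, dist ((⇑T)^[a m] x) ((⇑T)^[a m] y) < ε := by
  intro τ hτ
  set τ' : ℝ := min τ (1/2) with hτ'def
  have hτ'pos : 0 < τ' := lt_min hτ (by norm_num)
  have hτ'le : τ' ≤ 1/2 := min_le_right _ _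
  have hfn : ∀ n, (0:ℝ) < ‖f n‖ := fun n => norm_pos_iff.mpr (hne n)
  have hK : ∀ n : ℕ, ∃ K : Set X, IsCompact K ∧
      μ K > ENNReal.ofReal (1 - τ'/2^(n+2)) ∧ ∀ ε > (0:ℝ), ∃ δ > (0:ℝ),
      ∀ x ∈ K, ∀ y ∈ K, dist x y < δ →
        ∀ m, |f n ((⇑T)^[a m] x) - f n ((⇑T)^[a m] y)| < ε :=
    fun n => heq n (τ'/2^(n+2)) (by positivity)
  choose K hKc hKμ hKeq using hK
  have hmeas : ∀ n, MeasurableSet (K n) := fun n => (hKc n).isClosed.measurableSet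
  refine ⟨⋂ n, K n, (isClosed_iInter fun n => (hKc n).isClosed).isCompact, ?_, ?_⟩
  · -- measure estimate
    have hsmall : ∀ n : ℕ, τ'/2^(n+2) ≤ 1/2 := by
      intro n
      have h2 : (1:ℝ) ≤ 2^(n+2) := by
        calc (1:ℝ) = 1^(n+2) := (one_pow _).symm
          _ ≤ 2^(n+2) := pow_le_pow_left₀ (by norm_num) (by norm_num) _
      calc τ'/2^(n+2) ≤ τ' := div_le_self hτ'pos.le h2
        _ ≤ 1/2 := hτ'le
    have hcompl : ∀ n, μ (K n)ᶜ ≤ ENNReal.ofReal (τ'/2^(n+2)) := by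
      intro n
      rw [prob_compl_eq_one_sub (hmeas n)]
      calc 1 - μ (K n) ≤ 1 - ENNReal.ofReal (1 - τ'/2^(n+2)) :=
            tsub_le_tsub_left (hKμ n).le 1
        _ ≤ ENNReal.ofReal (τ'/2^(n+2)) := by
            rw [tsub_le_iff_right, ← ENNReal.ofReal_add (by positivity)
              (by linarith [hsmall n])]
            rw [show τ'/2^(n+2) + (1 - τ'/2^(n+2)) = 1 by ring, ENNReal.ofReal_one]
    have hsummable : Summable (fun n : ℕ => τ'/2^(n+2)) := by
      have : (fun n : ℕ => τ'/2^(n+2)) = fun n => (τ'/4) * (1/2)^n := by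
        funext n; rw [one_div, inv_pow, pow_add]; field_simp; ring
      rw [this]
      exact (summable_geometric_two).mul_left _
    have htsum : ∑' n : ℕ, τ'/2^(n+2) = τ'/2 := by
      have : (fun n : ℕ => τ'/2^(n+2)) = fun n => (τ'/4) * (1/2)^n := by
        funext n; rw [one_div, inv_pow, pow_add]; field_simp; ring
      rw [this, tsum_mul_left, tsum_geometric_two]; ring
    have hcomplK : μ (⋂ n, K n)ᶜ ≤ ENNReal.ofReal (τ'/2) := by
      rw [Set.compl_iInter]
      calc μ (⋃ n, (K n)ᶜ) ≤ ∑' n, μ (K n)ᶜ := measure_iUnion_le _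
        _ ≤ ∑' n, ENNReal.ofReal (τ'/2^(n+2)) := ENNReal.tsum_le_tsum hcompl
        _ = ENNReal.ofReal (∑' n, τ'/2^(n+2)) :=
            (ENNReal.ofReal_tsum_of_nonneg (fun n => by positivity) hsummable).symm
        _ = ENNReal.ofReal (τ'/2) := by rw [htsum]
    have hKval : μ (⋂ n, K n) = 1 - μ (⋂ n, K n)ᶜ := by
      have := prob_compl_eq_one_sub (μ := μ) (MeasurableSet.iInter fun n => hmeas n)
      rw [this, ENNReal.sub_sub_cancel ENNReal.one_ne_top prob_le_one]
    rw [hKval]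
    calc ENNReal.ofReal (1 - τ) ≤ ENNReal.ofReal (1 - τ') :=
          ENNReal.ofReal_le_ofReal (by simp [hτ'def]; linarith [min_le_left τ (1/2:ℝ)])
      _ < ENNReal.ofReal (1 - τ'/2) := by
          rw [ENNReal.ofReal_lt_ofReal_iff (by linarith)]; linarith
      _ = 1 - ENNReal.ofReal (τ'/2) := by
          rw [ENNReal.ofReal_sub 1 (by positivity), ENNReal.ofReal_one]
      _ ≤ 1 - μ (⋂ n, K n)ᶜ := tsub_le_tsub_left hcomplK 1
  · -- equicontinuity
    intro ε hε
    obtain ⟨N₀, hN₀⟩ := exists_pow_lt_of_lt_one (show (0:ℝ) < ε/4 by linarith)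
      (show (1:ℝ)/2 < 1 by norm_num)
    set N := N₀ + 1 with hNdef
    have hNpos : 0 < N := Nat.succ_pos _
    have hNlt : ((1:ℝ)/2)^N < ε/4 := by
      calc ((1:ℝ)/2)^N ≤ ((1:ℝ)/2)^N₀ :=
            pow_le_pow_of_le_one (by norm_num) (by norm_num) (Nat.le_succ _)
        _ < ε/4 := hN₀
    -- pick δ for each n < N
    have hδex : ∀ n : ℕ, ∃ δ > (0:ℝ), ∀ x ∈ K n, ∀ y ∈ K n, dist x y < δ →
        ∀ m, |f n ((⇑T)^[a m] x) - f n ((⇑T)^[a m] y)| < ε * ‖f n‖ / 2 := by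
      intro n
      exact hKeq n (ε * ‖f n‖ / 2) (by have := hfn n; positivity)
    choose δ hδpos hδ using hδex
    set δ₀ : ℝ := (Finset.range N).inf' (Finset.nonempty_range_iff.mpr hNpos.ne') δ with hδ₀def
    have hδ₀pos : 0 < δ₀ := by
      rw [hδ₀def, Finset.lt_inf'_iff]
      exact fun n _ => hδpos n
    refine ⟨δ₀, hδ₀pos, ?_⟩
    intro x hx y hy hxy m
    have hx' : ∀ n, x ∈ K n := Set.mem_iInter.mp hx
    have hy' : ∀ n, y ∈ K n := Set.mem_iInter.mp hy
    set x' := (⇑T)^[a m] x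
    set y' := (⇑T)^[a m] y
    set g : ℕ → ℝ := fun n => |f n x' - f n y'| / (2^(n+1) * ‖f n‖) with hgdef
    have hgnonneg : ∀ n, 0 ≤ g n := fun n => by positivity
    have hgbound : ∀ n, g n ≤ (1/2)^n := by
      intro n
      have h1 : |f n x' - f n y'| ≤ 2 * ‖f n‖ := by
        calc |f n x' - f n y'| ≤ |f n x'| + |f n y'| := abs_sub _ _
          _ ≤ ‖f n‖ + ‖f n‖ := add_le_add
              ((f n).norm_coe_le_norm x') ((f n).norm_coe_le_norm y')
          _ = 2 * ‖f n‖ := by ring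
      rw [hgdef]
      rw [div_le_iff₀ (by have := hfn n; positivity)]
      calc |f n x' - f n y'| ≤ 2 * ‖f n‖ := h1
        _ = (1/2)^n * (2^(n+1) * ‖f n‖) := by
            rw [one_div, inv_pow, pow_succ]
            field_simp
    have hgsummable : Summable g :=
      Summable.of_nonneg_of_le hgnonneg hgbound summable_geometric_two
    have hdist : dist x' y' = ∑' n, g n := hd x' y'
    have hsplit : ∑' n, g n = ∑ n ∈ Finset.range N, g n + ∑' n, g (n + N) :=
      (Summable.sum_add_tsum_nat_add' ((summable_nat_add_iff N).mpr hgsummable)).symm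
    -- finite part
    have hfin : ∑ n ∈ Finset.range N, g n ≤ ε/2 := by
      have hterm : ∀ n ∈ Finset.range N, g n ≤ ε / 2^(n+2) := by
        intro n hn
        have hδle : δ₀ ≤ δ n := Finset.inf'_le _ hn
        have := hδ n x (hx' n) y (hy' n) (lt_of_lt_of_le hxy hδle) m
        rw [hgdef]
        have h2 : |f n x' - f n y'| ≤ ε * ‖f n‖ / 2 := this.le
        rw [div_le_iff₀ (by have := hfn n; positivity)]
        calc |f n x' - f n y'| ≤ ε * ‖f n‖ / 2 := h2
          _ = ε / 2^(n+2) * (2^(n+1) * ‖f n‖) := by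
              rw [pow_succ, pow_succ]; field_simp
      calc ∑ n ∈ Finset.range N, g n ≤ ∑ n ∈ Finset.range N, ε / 2^(n+2) :=
            Finset.sum_le_sum hterm
        _ ≤ ∑' n : ℕ, ε / 2^(n+2) := by
            apply Summable.sum_le_tsum _ (fun n _ => by positivity)
            have : (fun n : ℕ => ε/2^(n+2)) = fun n => (ε/4) * (1/2)^n := by
              funext n; rw [one_div, inv_pow, pow_add]; field_simp; ring
            rw [this]
            exact summable_geometric_two.mul_left _
        _ = ε/2 := by
            have : (fun n : ℕ => ε/2^(n+2)) = fun n => (ε/4) * (1/2)^n := by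
              funext n; rw [one_div, inv_pow, pow_add]; field_simp; ring
            rw [this, tsum_mul_left, tsum_geometric_two]; ring
    -- tail part
    have htail : ∑' n, g (n + N) < ε/2 := by
      have h1 : ∑' n, g (n + N) ≤ ∑' n : ℕ, (1/2:ℝ)^(n + N) := by
        apply Summable.tsum_le_tsum (fun n => hgbound (n + N))
          ((summable_nat_add_iff N).mpr hgsummable)
        exact (summable_geometric_two).comp_injective (add_left_injective N)
      have h2 : ∑' n : ℕ, (1/2:ℝ)^(n + N) = 2 * (1/2)^N := by
        have : (fun n : ℕ => (1/2:ℝ)^(n + N)) = fun n => (1/2)^n * (1/2)^N := by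
          funext n; rw [pow_add]
        rw [this, tsum_mul_right, tsum_geometric_two]
      calc ∑' n, g (n + N) ≤ 2 * (1/2)^N := h1.trans_eq h2
        _ < 2 * (ε/4) := by linarith [hNlt]
        _ = ε/2 := by ring
    calc dist x' y' = ∑ n ∈ Finset.range N, g n + ∑' n, g (n + N) := by
          rw [hdist, hsplit]
      _ < ε/2 + ε/2 := add_lt_add_of_le_of_lt hfin htail
      _ = ε := by ring
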